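/- Let B be a slim double groupoid satisfying the filling condition, D(B) = (V * H)/J its diagonal groupoid (quotient of the free product by the normal subgroup bundle J generated by the relations [A] = x g y⁻¹ h⁻¹ for boxes A), and i : H → D(B), j : V → D(B) the canonical maps. Then D(B) = j(V)i(H): every arrow of D(B) can be written as j(g)i(x) with g ∈ V, x ∈ H, b(g) = l(x). -/

import Mathlib

/-- A groupoid over a base `Pt`, given concretely by a set of arrows with source and
target maps, identities, a (total, but only meaningful on composable pairs)
composition written in diagrammatic order (`comp g h` is "`g` then `h`",
defined when `e g = s h`), and inverses. -/
structure PreGroupoid (Pt : Type) (Arr : Type) where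
  s : Arr → Pt
  e : Arr → Pt
  id : Pt → Arr
  comp : Arr → Arr → Arr
  inv : Arr → Arr
  s_id : ∀ p, s (id p) = p
  e_id : ∀ p, e (id p) = p
  s_comp : ∀ g h, e g = s h → s (comp g h) = s g
  e_comp : ∀ g h, e g = s h → e (comp g h) = e h
  id_comp : ∀ g, comp (id (s g)) g = g
  comp_id : ∀ g, comp g (id (e g)) = g
  assoc : ∀ g h k, e g = s h → e h = s k → comp (comp g h) k = comp g (comp h k)
  s_inv : ∀ g, s (inv g) = e g
  e_inv : ∀ g, e (inv g) = s g
  comp_inv : ∀ g, comp g (inv g) = id (s g)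
  inv_comp : ∀ g, comp (inv g) g = id (e g)

/-- An action of a groupoid `G` over `Pt` on a fiber bundle `p : E → Pt`:
`act g x` is meaningful when `G.e g = p x`, lands in the fiber over `G.s g`,
is compatible with composition (`(gh) ▷ x = g ▷ (h ▷ x)`) and identities act
trivially. -/
structure GroupoidAction {Pt Arr E : Type} (G : PreGroupoid Pt Arr) (p : E → Pt) where
  act : Arr → E → E
  p_act : ∀ g x, G.e g = p x → p (act g x) = G.s g
  act_id : ∀ x, act (G.id (p x)) x = x
  act_comp : ∀ g h x, G.e g = G.s h → G.e h = p x →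
    act (G.comp g h) x = act g (act h x)

/-! ### The free product of two groupoids over a common base, via reduced words.
Letters are arrows of the disjoint union quiver `V ⊔ H`; a path is either a base
point (`Sum.inl p`) or a nonempty composable list of letters (`Sum.inr l`).  The
reduction operations (removing identity letters, collapsing a single identity
letter to its base point, and multiplying adjacent letters lying in the same
factor groupoid) generate an equivalence relation whose classes are the elements
of the free product `V * H`. -/

/-- A letter: an arrow of `V` (`inl`) or of `H` (`inr`). -/
abbrev Letter (Av Ah : Type) := Av ⊕ Ah

variable {Pt Av Ah : Type}

def lsrc (GV : PreGroupoid Pt Av) (GH : PreGroupoid Pt Ah) : Letter Av Ah → Pt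
  | .inl g => GV.s g
  | .inr x => GH.s x

def ltgt (GV : PreGroupoid Pt Av) (GH : PreGroupoid Pt Ah) : Letter Av Ah → Pt
  | .inl g => GV.e g
  | .inr x => GH.e x

/-- The letter is an identity arrow of its factor groupoid. -/
def lIsId (GV : PreGroupoid Pt Av) (GH : PreGroupoid Pt Ah) : Letter Av Ah → Prop
  | .inl g => ∃ p, g = GV.id p
  | .inr x => ∃ p, x = GH.id p

/-- Which factor groupoid the letter belongs to. -/
def lFac : Letter Av Ah → Bool
  | .inl _ => true
  | .inr _ => false

/-- The inverse of a letter, taken in its factor groupoid. -/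
def linv (GV : PreGroupoid Pt Av) (GH : PreGroupoid Pt Ah) : Letter Av Ah → Letter Av Ah
  | .inl g => .inl (GV.inv g)
  | .inr x => .inr (GH.inv x)

/-- One-step reduction of paths in the quiver `V ⊔ H`. -/
inductive Red (GV : PreGroupoid Pt Av) (GH : PreGroupoid Pt Ah) :
    (Pt ⊕ List (Letter Av Ah)) → (Pt ⊕ List (Letter Av Ah)) → Prop
  | remove_id (l₁ l₂ : List (Letter Av Ah)) (u : Letter Av Ah) :
      lIsId GV GH u → l₁ ++ l₂ ≠ [] →
      Red GV GH (.inr (l₁ ++ u :: l₂)) (.inr (l₁ ++ l₂))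
  | single_id (u : Letter Av Ah) (p : Pt) :
      lIsId GV GH u → lsrc GV GH u = p →
      Red GV GH (.inr [u]) (.inl p)
  | merge_v (l₁ l₂ : List (Letter Av Ah)) (g g' : Av) :
      GV.e g = GV.s g' →
      Red GV GH (.inr (l₁ ++ .inl g :: .inl g' :: l₂))
        (.inr (l₁ ++ .inl (GV.comp g g') :: l₂))
  | merge_h (l₁ l₂ : List (Letter Av Ah)) (x x' : Ah) :
      GH.e x = GH.s x' →
      Red GV GH (.inr (l₁ ++ .inr x :: .inr x' :: l₂))
        (.inr (l₁ ++ .inr (GH.comp x x') :: l₂))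

/-- Consecutive letters alternate between the two factor groupoids. -/
def Alternating : List (Letter Av Ah) → Prop :=
  List.Chain' (fun a b => lFac a ≠ lFac b)

/-- Consecutive letters are composable (target of one = source of the next). -/
def Composable (GV : PreGroupoid Pt Av) (GH : PreGroupoid Pt Ah) :
    List (Letter Av Ah) → Prop :=
  List.Chain' (fun a b => ltgt GV GH a = lsrc GV GH b)

/-- Reduced path: a base point, or a nonempty composable word with no identity
letters in which consecutive letters lie in different factors. -/
def ReducedW (GV : PreGroupoid Pt Av) (GH : PreGroupoid Pt Ah) :
    (Pt ⊕ List (Letter Av Ah)) → Prop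
  | .inl _ => True
  | .inr l => l ≠ [] ∧ Composable GV GH l ∧ (∀ u ∈ l, ¬ lIsId GV GH u) ∧ Alternating l

/-- Length of a path (a base point has length 0). -/
def wlen : (Pt ⊕ List (Letter Av Ah)) → ℕ
  | .inl _ => 0
  | .inr l => l.length

/-! ### Double groupoids.
A double groupoid with base `Pt`, boxes `Bx`, horizontal edges `Hh` and vertical
edges `Vv`: `hor` and `ver` are the edge groupoids over `Pt` (for a horizontal
edge `x`, `hor.s x` / `hor.e x` are its left / right endpoints; for a vertical
edge `g`, `ver.s g` / `ver.e g` are its top / bottom endpoints); `bh` is the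
horizontal composition groupoid of boxes over `Vv` (source = left edge, target =
right edge) and `bv` the vertical composition groupoid of boxes over `Hh`
(source = top edge, target = bottom edge), subject to compatibility of the edge
maps with the compositions and identities, and the interchange law. -/
structure DoubleGroupoid (Pt Bx Hh Vv : Type) where
  hor : PreGroupoid Pt Hh
  ver : PreGroupoid Pt Vv
  bh : PreGroupoid Vv Bx
  bv : PreGroupoid Hh Bx
  match_tl : ∀ A, hor.s (bv.s A) = ver.s (bh.s A)
  match_tr : ∀ A, hor.e (bv.s A) = ver.s (bh.e A)
  match_bl : ∀ A, hor.s (bv.e A) = ver.e (bh.s A)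
  match_br : ∀ A, hor.e (bv.e A) = ver.e (bh.e A)
  t_hcomp : ∀ A C, bh.e A = bh.s C → bv.s (bh.comp A C) = hor.comp (bv.s A) (bv.s C)
  b_hcomp : ∀ A C, bh.e A = bh.s C → bv.e (bh.comp A C) = hor.comp (bv.e A) (bv.e C)
  l_vcomp : ∀ A C, bv.e A = bv.s C → bh.s (bv.comp A C) = ver.comp (bh.s A) (bh.s C)
  r_vcomp : ∀ A C, bv.e A = bv.s C → bh.e (bv.comp A C) = ver.comp (bh.e A) (bh.e C)
  t_idh : ∀ g, bv.s (bh.id g) = hor.id (ver.s g)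
  b_idh : ∀ g, bv.e (bh.id g) = hor.id (ver.e g)
  l_idv : ∀ x, bh.s (bv.id x) = ver.id (hor.s x)
  r_idv : ∀ x, bh.e (bv.id x) = ver.id (hor.e x)
  idh_vcomp : ∀ g g', ver.e g = ver.s g' →
    bv.comp (bh.id g) (bh.id g') = bh.id (ver.comp g g')
  idv_hcomp : ∀ x y, hor.e x = hor.s y →
    bh.comp (bv.id x) (bv.id y) = bv.id (hor.comp x y)
  theta_eq : ∀ p, bh.id (ver.id p) = bv.id (hor.id p)
  interchange : ∀ A C A' C', bh.e A = bh.s C → bh.e A' = bh.s C' →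
    bv.e A = bv.s A' → bv.e C = bv.s C' →
    bv.comp (bh.comp A C) (bh.comp A' C') = bh.comp (bv.comp A A') (bv.comp C C')

namespace DoubleGroupoid

variable {Pt Bx Hh Vv : Type} (D : DoubleGroupoid Pt Bx Hh Vv)

/-- Top edge of a box. -/
def top (A : Bx) : Hh := D.bv.s A
/-- Bottom edge of a box. -/
def bot (A : Bx) : Hh := D.bv.e A
/-- Left edge of a box. -/
def lft (A : Bx) : Vv := D.bh.s A
/-- Right edge of a box. -/
def rgt (A : Bx) : Vv := D.bh.e A
/-- Top-left vertex of a box. -/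
def tlv (A : Bx) : Pt := D.ver.s (D.bh.s A)
/-- Bottom-left vertex of a box. -/
def blv (A : Bx) : Pt := D.ver.e (D.bh.s A)
/-- Bottom-right vertex of a box. -/
def brv (A : Bx) : Pt := D.ver.e (D.bh.e A)
/-- The doubly degenerate box `Θ_p` at a point. -/
def theta (p : Pt) : Bx := D.bh.id (D.ver.id p)
/-- The core groupoid: boxes whose top and right edges are identities.  (Its source
and target maps are the bottom-left and bottom-right vertices.) -/
def core : Set Bx :=
  {E | (∃ p, D.bv.s E = D.hor.id p) ∧ (∃ q, D.bh.e E = D.ver.id q)}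
/-- The action of the core groupoid on boxes:
`E ⇀ A = {(id l(A), A) over (E, id b(A))}`; since `id l(A) ⬝ A = A`, this is the
vertical composite of `A` over `E ⬝ id b(A)`.  It is meaningful when
`br(E) = bl(A)`.  For `E, M` in the core, `coreAct E M` is also the core
composition `E ∘ M`. -/
def coreAct (E A : Bx) : Bx :=
  D.bv.comp A (D.bh.comp E (D.bv.id (D.bv.e A)))
/-- The associated bundle `K`: boxes all of whose edges are identities. -/
def kBundle : Set Bx :=
  {K | (∃ p, D.bv.s K = D.hor.id p) ∧ (∃ p, D.bv.e K = D.hor.id p) ∧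
       (∃ p, D.bh.s K = D.ver.id p) ∧ (∃ p, D.bh.e K = D.ver.id p)}

end DoubleGroupoid

variable {Pt Bx Hh Vv : Type}

/-- The bracket word `[A] = x g y⁻¹ h⁻¹` associated to a box `A` (top `x`, right
`g`, bottom `y`, left `h`), a loop of the free product `V * H` based at the
top-left vertex of `A`. -/
def brktWord (D : DoubleGroupoid Pt Bx Hh Vv) (A : Bx) : List (Letter Vv Hh) :=
  [.inr (D.bv.s A), .inl (D.bh.e A),
   .inr (D.hor.inv (D.bv.e A)), .inl (D.ver.inv (D.bh.s A))]

/-- One-step relation generating equality in the diagonal groupoid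
`D(B) = (V * H) / J`: either a reduction of the free product, or insertion of a
bracket relation `[A]` at an occurrence of its base point (the top-left vertex of
`A`). -/
inductive RedJ (D : DoubleGroupoid Pt Bx Hh Vv) :
    (Pt ⊕ List (Letter Vv Hh)) → (Pt ⊕ List (Letter Vv Hh)) → Prop
  | red (w w' : Pt ⊕ List (Letter Vv Hh)) :
      Red D.ver D.hor w w' → RedJ D w w'
  | insert (l₁ l₂ : List (Letter Vv Hh)) (A : Bx) :
      l₁ ++ l₂ ≠ [] →
      (∀ z ∈ l₁.getLast?, ltgt D.ver D.hor z = D.ver.s (D.bh.s A)) →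
      (∀ z ∈ l₂.head?, lsrc D.ver D.hor z = D.ver.s (D.bh.s A)) →
      RedJ D (.inr (l₁ ++ l₂)) (.inr (l₁ ++ brktWord D A ++ l₂))
  | insert_pt (p : Pt) (A : Bx) :
      D.ver.s (D.bh.s A) = p →
      RedJ D (.inl p) (.inr (brktWord D A))

section Aux

variable {Pt Bx Hh Vv : Type}

open Relation

/-- The key swap: using a filling box, `x ⬝ g` can be replaced by `h ⬝ y`
(the left and bottom edges of the box) inside any left context `l₁` whose
last letter ends at the top-left vertex. -/
lemma swap_lemma (D : DoubleGroupoid Pt Bx Hh Vv)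
    (hfill : ∀ (x : Hh) (g : Vv), D.hor.e x = D.ver.s g →
      ∃ A : Bx, D.bv.s A = x ∧ D.bh.e A = g)
    (l₁ rest : List (Letter Vv Hh)) (x : Hh) (g : Vv)
    (hxg : D.hor.e x = D.ver.s g)
    (hl₁ : ∀ z ∈ l₁.getLast?, ltgt D.ver D.hor z = D.hor.s x) :
    ∃ (h : Vv) (y : Hh), D.ver.s h = D.hor.s x ∧ D.ver.e h = D.hor.s y ∧
      D.hor.e y = D.ver.e g ∧
      Relation.EqvGen (RedJ D) (.inr (l₁ ++ .inr x :: .inl g :: rest))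
        (.inr (l₁ ++ .inl h :: .inr y :: rest)) := by
  obtain ⟨A, rfl, rfl⟩ := hfill x g hxg
  refine ⟨D.bh.s A, D.bv.e A, (D.match_tl A).symm, (D.match_bl A).symm,
    (D.match_br A), ?_⟩
  set h := D.bh.s A with hh
  set y := D.bv.e A with hy
  set x := D.bv.s A with hx
  set g := D.bh.e A with hg
  have htlv : D.ver.s h = D.hor.s x := (D.match_tl A).symm
  -- step 1: insert the bracket word in front of `h y rest`
  have e1 : RedJ D (.inr (l₁ ++ .inl h :: .inr y :: rest))
      (.inr (l₁ ++ brktWord D A ++ (.inl h :: .inr y :: rest))) := by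
    refine RedJ.insert l₁ (.inl h :: .inr y :: rest) A (by simp) ?_ ?_
    · intro z hz
      rw [hl₁ z hz, ← htlv]
    · intro z hz
      simp only [List.head?_cons, Option.mem_def, Option.some.injEq] at hz
      subst hz
      rfl
  -- step 2: merge `h⁻¹ ⬝ h` into an identity
  have e2 : RedJ D (.inr (l₁ ++ brktWord D A ++ (.inl h :: .inr y :: rest)))
      (.inr ((l₁ ++ [.inr x, .inl g, .inr (D.hor.inv y)]) ++
        .inl (D.ver.id (D.ver.e h)) :: .inr y :: rest)) := by
    have := Red.merge_v (GV := D.ver) (GH := D.hor)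
      (l₁ ++ [.inr x, .inl g, .inr (D.hor.inv y)]) (.inr y :: rest)
      (D.ver.inv h) h (D.ver.e_inv h)
    rw [D.ver.inv_comp h] at this
    have heq : (l₁ ++ [Sum.inr x, Sum.inl g, Sum.inr (D.hor.inv y)]) ++
        Sum.inl (D.ver.inv h) :: Sum.inl h :: (Sum.inr y :: rest)
        = l₁ ++ brktWord D A ++ (.inl h :: .inr y :: rest) := by
      simp [brktWord, List.append_assoc]; exact ⟨rfl, rfl, rfl, rfl⟩
    rw [heq] at this
    exact RedJ.red _ _ this
  -- step 3: remove the identity letter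
  have e3 : RedJ D (.inr ((l₁ ++ [.inr x, .inl g, .inr (D.hor.inv y)]) ++
        .inl (D.ver.id (D.ver.e h)) :: .inr y :: rest))
      (.inr ((l₁ ++ [.inr x, .inl g]) ++ .inr (D.hor.inv y) :: .inr y :: rest)) := by
    have := Red.remove_id (GV := D.ver) (GH := D.hor)
      (l₁ ++ [.inr x, .inl g, .inr (D.hor.inv y)]) (.inr y :: rest)
      (.inl (D.ver.id (D.ver.e h))) ⟨_, rfl⟩ (by simp)
    have heq : (l₁ ++ [Sum.inr x, Sum.inl g, Sum.inr (D.hor.inv y)]) ++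
        (Sum.inr y :: rest)
        = (l₁ ++ [.inr x, .inl g]) ++ .inr (D.hor.inv y) :: .inr y :: rest := by
      simp [List.append_assoc]
    rw [heq] at this
    exact RedJ.red _ _ this
  -- step 4: merge `y⁻¹ ⬝ y` into an identity
  have e4 : RedJ D (.inr ((l₁ ++ [.inr x, .inl g]) ++
        .inr (D.hor.inv y) :: .inr y :: rest))
      (.inr ((l₁ ++ [.inr x, .inl g]) ++ .inr (D.hor.id (D.hor.e y)) :: rest)) := by
    have := Red.merge_h (GV := D.ver) (GH := D.hor)
      (l₁ ++ [.inr x, .inl g]) rest (D.hor.inv y) y (D.hor.e_inv y)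
    rw [D.hor.inv_comp y] at this
    exact RedJ.red _ _ this
  -- step 5: remove the identity letter
  have e5 : RedJ D (.inr ((l₁ ++ [.inr x, .inl g]) ++
        .inr (D.hor.id (D.hor.e y)) :: rest))
      (.inr (l₁ ++ .inr x :: .inl g :: rest)) := by
    have := Red.remove_id (GV := D.ver) (GH := D.hor)
      (l₁ ++ [.inr x, .inl g]) rest (.inr (D.hor.id (D.hor.e y)))
      ⟨_, rfl⟩ (by simp)
    have heq2 : (l₁ ++ [Sum.inr x, Sum.inl g]) ++ rest
        = l₁ ++ .inr x :: .inl g :: rest := by simp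
    rw [heq2] at this
    exact RedJ.red _ _ this
  exact .symm _ _ <| .trans _ _ _ (.rel _ _ e1) <| .trans _ _ _ (.rel _ _ e2) <|
    .trans _ _ _ (.rel _ _ e3) <| .trans _ _ _ (.rel _ _ e4) (.rel _ _ e5)

lemma main_aux (D : DoubleGroupoid Pt Bx Hh Vv)
    (hfill : ∀ (x : Hh) (g : Vv), D.hor.e x = D.ver.s g →
      ∃ A : Bx, D.bv.s A = x ∧ D.bh.e A = g) :
    ∀ n (l : List (Letter Vv Hh)), l.length ≤ n → l ≠ [] →
      Composable D.ver D.hor l →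
      ∃ (g : Vv) (x : Hh), D.ver.e g = D.hor.s x ∧
        Relation.EqvGen (RedJ D) (.inr l) (.inr [.inl g, .inr x]) := by
  intro n
  induction n with
  | zero => intro l hl hne _; simp [List.length_eq_zero_iff] at hl; exact absurd hl hne
  | succ n IH =>
    -- a sub-step handler for words already starting with `inl g :: inr x`
    have claim : ∀ (g : Vv) (x : Hh) (t : List (Letter Vv Hh)),
        D.ver.e g = D.hor.s x → Composable D.ver D.hor (.inr x :: t) →
        t.length + 2 ≤ n + 1 →
        ∃ (g' : Vv) (x' : Hh), D.ver.e g' = D.hor.s x' ∧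
          Relation.EqvGen (RedJ D) (.inr (.inl g :: .inr x :: t))
            (.inr [.inl g', .inr x']) := by
      intro g x t hgx hc hlen
      match t with
      | [] => exact ⟨g, x, hgx, .refl _⟩
      | (Sum.inr x'') :: t' =>
        obtain ⟨hxx, hc'⟩ := List.isChain_cons_cons.mp hc
        have hxx' : D.hor.e x = D.hor.s x'' := hxx
        have step : RedJ D (.inr (.inl g :: .inr x :: .inr x'' :: t'))
            (.inr (.inl g :: .inr (D.hor.comp x x'') :: t')) :=
          RedJ.red _ _ (Red.merge_h [.inl g] t' x x'' hxx')
        have hc2 : Composable D.ver D.hor (.inl g :: .inr (D.hor.comp x x'') :: t') := by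
          refine List.isChain_cons_cons.mpr ⟨?_, ?_⟩
          · show D.ver.e g = D.hor.s (D.hor.comp x x'')
            rw [D.hor.s_comp _ _ hxx']; exact hgx
          · refine List.isChain_cons.mpr ⟨?_, (List.isChain_cons.mp hc').2⟩
            have hc' := List.isChain_cons.mp hc'
            intro z hz
            have := hc'.1 z hz
            show D.hor.e (D.hor.comp x x'') = _
            rw [D.hor.e_comp _ _ hxx']; exact this
        obtain ⟨g', x', hg'x', he⟩ := IH (.inl g :: .inr (D.hor.comp x x'') :: t')
          (by simp only [List.length_cons] at hlen ⊢; omega) (by simp) hc2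
        exact ⟨g', x', hg'x', .trans _ _ _ (.rel _ _ step) he⟩
      | (Sum.inl g'') :: t' =>
        obtain ⟨hxx, hc'⟩ := List.isChain_cons_cons.mp hc
        have hxg'' : D.hor.e x = D.ver.s g'' := hxx
        obtain ⟨h, y, hsh, heh, hey, hsw⟩ := swap_lemma D hfill [.inl g] t' x g'' hxg''
          (by intro z hz; simp at hz; subst hz; exact hgx)
        -- `hsw : inl g :: inl h :: inr y :: t'  ~  inl g :: inr x :: inl g'' :: t'`
        have hgh : D.ver.e g = D.ver.s h := by rw [hsh]; exact hgx
        have step : RedJ D (.inr (.inl g :: .inl h :: .inr y :: t'))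
            (.inr (.inl (D.ver.comp g h) :: .inr y :: t')) :=
          RedJ.red _ _ (Red.merge_v [] (.inr y :: t') g h hgh)
        have hc2 : Composable D.ver D.hor (.inl (D.ver.comp g h) :: .inr y :: t') := by
          refine List.isChain_cons_cons.mpr ⟨?_, ?_⟩
          · show D.ver.e (D.ver.comp g h) = D.hor.s y
            rw [D.ver.e_comp _ _ hgh]; exact heh
          · refine List.isChain_cons.mpr ⟨?_, (List.isChain_cons.mp hc').2⟩
            have hc' := List.isChain_cons.mp hc'
            intro z hz
            have := hc'.1 z hz
            show D.hor.e y = _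
            rw [hey]; exact this
        obtain ⟨g', x', hg'x', he⟩ := IH (.inl (D.ver.comp g h) :: .inr y :: t')
          (by simp only [List.length_cons] at hlen ⊢; omega) (by simp) hc2
        refine ⟨g', x', hg'x', ?_⟩
        have h1 : Relation.EqvGen (RedJ D) (.inr (.inl g :: .inr x :: .inl g'' :: t'))
            (.inr (.inl g :: .inl h :: .inr y :: t')) := by
          simpa using hsw
        exact .trans _ _ _ h1 (.trans _ _ _ (.rel _ _ step) he)
    intro l hl hne hc
    match l with
    | [] => exact absurd rfl hne
    | [Sum.inl g] =>
      refine ⟨g, D.hor.id (D.ver.e g), (D.hor.s_id _).symm, ?_⟩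
      refine .symm _ _ (.rel _ _ (RedJ.red _ _ ?_))
      have := Red.remove_id (GV := D.ver) (GH := D.hor) [.inl g] []
        (.inr (D.hor.id (D.ver.e g))) ⟨_, rfl⟩ (by simp)
      simpa using this
    | [Sum.inr x] =>
      refine ⟨D.ver.id (D.hor.s x), x, D.ver.e_id _, ?_⟩
      refine .symm _ _ (.rel _ _ (RedJ.red _ _ ?_))
      have := Red.remove_id (GV := D.ver) (GH := D.hor) []
        [.inr x] (.inl (D.ver.id (D.hor.s x))) ⟨_, rfl⟩ (by simp)
      simpa using this
    | a :: b :: t =>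
      obtain ⟨hab, hc'⟩ := List.isChain_cons_cons.mp hc
      have hlen' : t.length + 2 ≤ n + 1 := by simpa using hl
      match a, b with
      | Sum.inl g, Sum.inr x => exact claim g x t hab hc' hlen'
      | Sum.inl g, Sum.inl g' =>
        have hgg : D.ver.e g = D.ver.s g' := hab
        have step : RedJ D (.inr (.inl g :: .inl g' :: t))
            (.inr (.inl (D.ver.comp g g') :: t)) :=
          RedJ.red _ _ (Red.merge_v [] t g g' hgg)
        have hc2 : Composable D.ver D.hor (.inl (D.ver.comp g g') :: t) := by
          refine List.isChain_cons.mpr ⟨?_, (List.isChain_cons.mp hc').2⟩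
          have hc' := List.isChain_cons.mp hc'
          intro z hz
          have := hc'.1 z hz
          show D.ver.e (D.ver.comp g g') = _
          rw [D.ver.e_comp _ _ hgg]; exact this
        obtain ⟨g'', x'', hgx, he⟩ := IH (.inl (D.ver.comp g g') :: t)
          (by simp only [List.length_cons] at hlen' ⊢; omega) (by simp) hc2
        exact ⟨g'', x'', hgx, .trans _ _ _ (.rel _ _ step) he⟩
      | Sum.inr x, Sum.inr x' =>
        have hxx : D.hor.e x = D.hor.s x' := hab
        have step : RedJ D (.inr (.inr x :: .inr x' :: t))
            (.inr (.inr (D.hor.comp x x') :: t)) :=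
          RedJ.red _ _ (Red.merge_h [] t x x' hxx)
        have hc2 : Composable D.ver D.hor (.inr (D.hor.comp x x') :: t) := by
          refine List.isChain_cons.mpr ⟨?_, (List.isChain_cons.mp hc').2⟩
          have hc' := List.isChain_cons.mp hc'
          intro z hz
          have := hc'.1 z hz
          show D.hor.e (D.hor.comp x x') = _
          rw [D.hor.e_comp _ _ hxx]; exact this
        obtain ⟨g'', x'', hgx, he⟩ := IH (.inr (D.hor.comp x x') :: t)
          (by simp only [List.length_cons] at hlen' ⊢; omega) (by simp) hc2
        exact ⟨g'', x'', hgx, .trans _ _ _ (.rel _ _ step) he⟩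
      | Sum.inr x, Sum.inl g =>
        have hxg : D.hor.e x = D.ver.s g := hab
        obtain ⟨h, y, hsh, heh, hey, hsw⟩ := swap_lemma D hfill [] t x g hxg
          (by intro z hz; simp at hz)
        have hc2 : Composable D.ver D.hor (.inr y :: t) := by
          refine List.isChain_cons.mpr ⟨?_, (List.isChain_cons.mp hc').2⟩
          have hc' := List.isChain_cons.mp hc'
          intro z hz
          have := hc'.1 z hz
          show D.hor.e y = _
          rw [hey]; exact this
        obtain ⟨g', x', hg'x', he⟩ := claim h y t heh hc2 hlen'
        refine ⟨g', x', hg'x', ?_⟩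
        have h1 : Relation.EqvGen (RedJ D) (.inr (.inr x :: .inl g :: t))
            (.inr (.inl h :: .inr y :: t)) := by simpa using hsw
        exact .trans _ _ _ h1 he

end Aux

/-- Let `B` be a slim double groupoid satisfying the filling condition and
`D(B) = (V * H)/J` its diagonal groupoid, with canonical maps `i : H → D(B)`,
`j : V → D(B)`.  Then `D(B) = j(V) i(H)`: every arrow of `D(B)` — i.e. every
class of composable paths of `V ⊔ V` modulo reductions and bracket relations —
can be written as `j(g) i(x)` with `g ∈ V`, `x ∈ H` and `b(g) = l(x)`. -/
theorem diagonal_factorization (D : DoubleGroupoid Pt Bx Hh Vv)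
    (hslim : ∀ A A' : Bx, D.bv.s A = D.bv.s A' → D.bv.e A = D.bv.e A' →
      D.bh.s A = D.bh.s A' → D.bh.e A = D.bh.e A' → A = A')
    (hfill : ∀ (x : Hh) (g : Vv), D.hor.e x = D.ver.s g →
      ∃ A : Bx, D.bv.s A = x ∧ D.bh.e A = g) :
    ∀ w : Pt ⊕ List (Letter Vv Hh),
      (∀ l, w = .inr l → l ≠ [] ∧ Composable D.ver D.hor l) →
      ∃ (g : Vv) (x : Hh), D.ver.e g = D.hor.s x ∧
        Relation.EqvGen (RedJ D) w (.inr [.inl g, .inr x]) := by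
  intro w hw
  match w with
  | .inl p =>
    refine ⟨D.ver.id p, D.hor.id p, by rw [D.ver.e_id, D.hor.s_id], ?_⟩
    have s1 : RedJ D (.inr [.inl (D.ver.id p), .inr (D.hor.id p)])
        (.inr [.inr (D.hor.id p)]) := by
      have := Red.remove_id (GV := D.ver) (GH := D.hor) []
        [.inr (D.hor.id p)] (.inl (D.ver.id p)) ⟨_, rfl⟩ (by simp)
      simpa using RedJ.red _ _ this
    have s2 : RedJ D (.inr [.inr (D.hor.id p)]) (.inl p) :=
      RedJ.red _ _ (Red.single_id (.inr (D.hor.id p)) p ⟨_, rfl⟩ (D.hor.s_id p))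
    exact .symm _ _ (.trans _ _ _ (.rel _ _ s1) (.rel _ _ s2))
  | .inr l =>
    obtain ⟨hne, hc⟩ := hw l rfl
    exact main_aux D hfill l.length l le_rfl hne hc
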